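/- arXiv:2211.07523 — 3 statements merged into one kernel-verified Lean document; each statement's English description precedes it below -/
import Mathlib

section
/- Let A be a free module over the Novikov ring Λ_{≥0}, equip A with its canonical filtration ρ(a) = sup{r : a ∈ T^r A}, and equip A ⊗ Λ with the induced non-archimedean valuation val_A(a) = -inf{r : T^r a ∈ ι(A)}. Then the natural map from (the completion of A as a Λ_{≥0}-module) tensored with Λ to the completion of A ⊗ Λ as a normed space, Â ⊗ Λ → (A ⊗ Λ)^, is a valuation-preserving isomorphism. -/
open scoped NNReal

/-- The pseudodistance `e^{-v(x-y)}` induced by a valuation `v` and a difference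
operation `sub`. -/
noncomputable def vsDist {X : Type*} (v : X → EReal) (sub : X → X → X) (x y : X) : ℝ :=
  if v (sub x y) = ⊤ then 0 else Real.exp (-(v (sub x y)).toReal)

/-- A sequence is Cauchy with respect to a distance function `d`. -/
def IsCauchyWith {X : Type*} (d : X → X → ℝ) (s : ℕ → X) : Prop :=
  ∀ ε : ℝ, 0 < ε → ∃ N : ℕ, ∀ m ≥ N, ∀ n ≥ N, d (s m) (s n) < ε

/-- Two Cauchy sequences are identified when their distance converges to `0`. -/
def NullWith {X : Type*} (d : X → X → ℝ)
    (s t : {s : ℕ → X // IsCauchyWith d s}) : Prop :=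
  Filter.Tendsto (fun n => d (s.1 n) (t.1 n)) Filter.atTop (nhds 0)

/-- The completion with respect to a distance function: Cauchy sequences modulo
null sequences. -/
def CompletionWith {X : Type*} (d : X → X → ℝ) : Type _ :=
  Quot (NullWith d)

/-- The class of a Cauchy sequence in the completion. -/
def CompletionWith.mk {X : Type*} (d : X → X → ℝ)
    (s : {s : ℕ → X // IsCauchyWith d s}) : CompletionWith d :=
  Quot.mk _ s

/-- The base change to the Novikov field, `M ⊗ Λ ≅ (M × ℝ)/∼` with
`(a, s) ∼ (T^r • a, s + r)`, for a space `M` with a rescaling action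
`act r : M → M` by the powers `T^r` of the Novikov parameter. -/
def TensQ (X : Type*) (act : ℝ≥0 → X → X) : Type _ :=
  Quot (fun p q : X × ℝ => ∃ r : ℝ≥0, q.1 = act r p.1 ∧ q.2 = p.2 + (r : ℝ))

/-- The class of a pair `(a, s)`, representing `a/T^s`, in the base change. -/
def TensQ.mk {X : Type*} (act : ℝ≥0 → X → X) (a : X) (s : ℝ) : TensQ X act :=
  Quot.mk _ (a, s)

namespace Stmt3Aux

lemma esub_top_iff (x : EReal) (t : ℝ) : x - (t:EReal) = ⊤ ↔ x = ⊤ := by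
  induction x using EReal.rec with
  | bot => simp [EReal.bot_sub]
  | coe a => rw [← EReal.coe_sub]; exact iff_of_false (EReal.coe_ne_top _) (EReal.coe_ne_top _)
  | top => simp [EReal.top_sub_coe]

lemma esub_ne_bot {x : EReal} (r : ℝ) (hx : x ≠ ⊥) : x - (r:EReal) ≠ ⊥ := by
  induction x using EReal.rec with
  | bot => simp at hx
  | coe a => rw [← EReal.coe_sub]; exact EReal.coe_ne_bot _
  | top => simp [EReal.top_sub_coe]

lemma lt_esub_iff {v : EReal} {t u : ℝ} (hv : v ≠ ⊥) :
    ((u : ℝ):EReal) < v - (t : EReal) ↔ ((u + t : ℝ) : EReal) < v := by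
  induction v using EReal.rec with
  | bot => simp at hv
  | coe a =>
      rw [← EReal.coe_sub, EReal.coe_lt_coe_iff, EReal.coe_lt_coe_iff]
      constructor <;> intro <;> linarith
  | top => simp [EReal.top_sub_coe, ← EReal.coe_add, EReal.coe_lt_top]

lemma eq_add_of_esub_eq {x y : EReal} {r : ℝ} (hx : x ≠ ⊥) (h : x - (r:EReal) = y) :
    x = y + (r:EReal) := by
  induction x using EReal.rec with
  | bot => simp at hx
  | coe a => rw [← EReal.coe_sub] at h; rw [← h, ← EReal.coe_add]; norm_num
  | top => rw [EReal.top_sub_coe] at h; rw [← h, EReal.top_add_coe]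

lemma toReal_esub {v : EReal} (t : ℝ) (h1 : v ≠ ⊤) (h2 : v ≠ ⊥) :
    (v - (t:EReal)).toReal = v.toReal - t := by
  induction v using EReal.rec with
  | bot => simp at h2
  | coe a => rw [← EReal.coe_sub, EReal.toReal_coe, EReal.toReal_coe]
  | top => simp at h1

/-- The "exponential of minus valuation" function. -/
noncomputable def eD (v : EReal) : ℝ := if v = ⊤ then 0 else Real.exp (-v.toReal)

lemma vsDist_eq_eD {X : Type*} (v : X → EReal) (sub : X → X → X) (x y : X) :
    vsDist v sub x y = eD (v (sub x y)) := rfl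

lemma eD_nonneg (v : EReal) : 0 ≤ eD v := by
  unfold eD; split
  · exact le_refl 0
  · exact (Real.exp_pos _).le

lemma eD_mono {v w : EReal} (hv : v ≠ ⊥) (h : v ≤ w) : eD w ≤ eD v := by
  unfold eD
  by_cases hw : w = ⊤
  · rw [if_pos hw]; split
    · exact le_refl _
    · exact (Real.exp_pos _).le
  · have hvt : v ≠ ⊤ := fun hvt => hw (top_le_iff.1 (by rw [hvt] at h; exact h))
    rw [if_neg hw, if_neg hvt]
    exact Real.exp_le_exp.2 (neg_le_neg (EReal.toReal_le_toReal h hv hw))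

lemma eD_lt_exp {v : EReal} {k : ℝ} (hb : v ≠ ⊥) :
    eD v < Real.exp (-k) ↔ (k:EReal) < v := by
  unfold eD
  by_cases h : v = ⊤
  · simp [h, Real.exp_pos, EReal.coe_lt_top]
  · rw [if_neg h, Real.exp_lt_exp, neg_lt_neg_iff,
      show v = ((v.toReal : ℝ) : EReal) from (EReal.coe_toReal h hb).symm, EReal.toReal_coe,
      EReal.coe_lt_coe_iff]

lemma eD_eq_zero {v : EReal} (h : v = ⊤) : eD v = 0 := if_pos h

section Rho

variable {R : Type*} [CommRing R] (T : ℝ≥0 → R)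
variable {A : Type*} [AddCommGroup A] [Module R A] (ρ : A → EReal)

lemma smul_T (hTadd : ∀ r s : ℝ≥0, T (r + s) = T r * T s) (r s : ℝ≥0) (a : A) :
    T r • T s • a = T (r + s) • a := by rw [smul_smul, ← hTadd]

variable (hρ : ∀ a : A,
  ρ a = sSup {x : EReal | ∃ r : ℝ≥0, x = ((r : ℝ) : EReal) ∧ ∃ c : A, a = T r • c})

include hρ

lemma rho_nonneg (h0 : T 0 = 1) (a : A) : (0:EReal) ≤ ρ a := by
  rw [hρ]
  refine le_sSup ⟨0, by norm_num, a, ?_⟩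
  rw [h0, one_smul]

lemma rho_ne_bot (h0 : T 0 = 1) (a : A) : ρ a ≠ ⊥ := by
  intro hb
  have := rho_nonneg T ρ hρ h0 a
  rw [hb, le_bot_iff] at this
  exact (by simp : (0:EReal) ≠ ⊥) this

lemma rho_zero : ρ (0:A) = ⊤ := by
  rw [hρ, sSup_eq_top]
  intro b hb
  obtain ⟨y, hy1, _⟩ := EReal.exists_between_coe_real hb
  refine ⟨(((y.toNNReal + 1 : ℝ≥0) : ℝ) : EReal), ⟨_, rfl, 0, (smul_zero _).symm⟩, ?_⟩
  refine lt_trans hy1 ?_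
  rw [EReal.coe_lt_coe_iff]
  push_cast
  have := Real.le_coe_toNNReal y
  linarith

lemma rho_exists {a : A} {u : EReal} (h : u < ρ a) :
    ∃ r : ℝ≥0, u < ((r:ℝ):EReal) ∧ ∃ c, a = T r • c := by
  rw [hρ] at h
  obtain ⟨x, ⟨r, rfl, c, hc⟩, hx⟩ := lt_sSup_iff.1 h
  exact ⟨r, hx, c, hc⟩

lemma rho_neg (a : A) : ρ (-a) = ρ a := by
  rw [hρ, hρ]; congr 1; ext x
  constructor
  · rintro ⟨r, rfl, c, hc⟩; exact ⟨r, rfl, -c, by rw [smul_neg, ← hc, neg_neg]⟩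
  · rintro ⟨r, rfl, c, hc⟩; exact ⟨r, rfl, -c, by rw [smul_neg, ← hc]⟩

lemma rho_min (hTadd : ∀ r s : ℝ≥0, T (r + s) = T r * T s) (a b : A) :
    min (ρ a) (ρ b) ≤ ρ (a - b) := by
  by_contra hcon
  push_neg at hcon
  obtain ⟨y, hy1, hy2⟩ := EReal.exists_between_coe_real hcon
  have ha : ((y:ℝ):EReal) < ρ a := lt_of_lt_of_le hy2 (min_le_left _ _)
  have hb : ((y:ℝ):EReal) < ρ b := lt_of_lt_of_le hy2 (min_le_right _ _)
  obtain ⟨r1, hr1, c1, hc1⟩ := rho_exists T ρ hρ ha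
  obtain ⟨r2, hr2, c2, hc2⟩ := rho_exists T ρ hρ hb
  set r := min r1 r2 with hrdef
  have hmem : a - b = T r • (T (r1 - r) • c1 - T (r2 - r) • c2) := by
    rw [smul_sub, smul_T T hTadd, smul_T T hTadd,
      add_tsub_cancel_of_le (min_le_left r1 r2), add_tsub_cancel_of_le (min_le_right r1 r2),
      ← hc1, ← hc2]
  have hle : ((r:ℝ):EReal) ≤ ρ (a - b) := by
    rw [hρ]; exact le_sSup ⟨r, rfl, _, hmem⟩
  have hyr : ((y:ℝ):EReal) < ((r:ℝ):EReal) := by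
    rw [EReal.coe_lt_coe_iff] at hr1 hr2 ⊢
    rw [hrdef]
    push_cast
    exact lt_min hr1 hr2
  exact absurd (lt_trans (lt_of_le_of_lt hle hy1) hyr) (lt_irrefl _)

lemma rho_add (hTadd : ∀ r s : ℝ≥0, T (r + s) = T r * T s) (a b : A) :
    min (ρ a) (ρ b) ≤ ρ (a + b) := by
  have := rho_min T ρ hρ hTadd a (-b)
  rw [rho_neg T ρ hρ, sub_neg_eq_add] at this
  exact this

end Rho

end Stmt3Aux
namespace Stmt3Aux

lemma tensq_raise {X : Type*} (act : ℝ≥0 → X → X) (a : X) {s x : ℝ} (h : s ≤ x) :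
    TensQ.mk act a s = TensQ.mk act (act (x - s).toNNReal a) x :=
  Quot.sound ⟨(x - s).toNNReal, rfl, by
    rw [Real.coe_toNNReal _ (sub_nonneg.2 h)]; ring⟩

lemma tensq_shift {X : Type*} (act : ℝ≥0 → X → X) (a : X) (s : ℝ) (r : ℝ≥0) :
    TensQ.mk act a s = TensQ.mk act (act r a) (s + (r:ℝ)) :=
  Quot.sound ⟨r, rfl, rfl⟩

section TQ

variable {R : Type*} [CommRing R] (T : ℝ≥0 → R)
variable {A : Type*} [AddCommGroup A] [Module R A]

/-- The saturated relation on pairs. -/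
def RelT (p q : A × ℝ) : Prop :=
  ∃ r1 r2 : ℝ≥0, p.2 + (r1:ℝ) = q.2 + (r2:ℝ) ∧ T r1 • p.1 = T r2 • q.1

lemma relT_equiv (h0 : T 0 = 1) (hTadd : ∀ r s : ℝ≥0, T (r + s) = T r * T s) :
    Equivalence (RelT (A := A) T) := by
  constructor
  · intro p; exact ⟨0, 0, rfl, rfl⟩
  · rintro p q ⟨r1, r2, h1, h2⟩; exact ⟨r2, r1, h1.symm, h2.symm⟩
  · rintro p q w ⟨r1, r2, h1, h2⟩ ⟨r3, r4, h3, h4⟩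
    refine ⟨r1 + r3, r4 + r2, by push_cast; push_cast at h1 h3; linarith, ?_⟩
    have e1 : T (r1 + r3) • p.1 = T (r3 + r2) • q.1 := by
      rw [add_comm r1 r3, ← smul_T T hTadd, h2, smul_T T hTadd]
    have e2 : T (r4 + r2) • w.1 = T (r3 + r2) • q.1 := by
      rw [add_comm r4 r2, ← smul_T T hTadd, ← h4, smul_T T hTadd, add_comm r2 r3]
    rw [e1, e2]

lemma tensq_exact (h0 : T 0 = 1) (hTadd : ∀ r s : ℝ≥0, T (r + s) = T r * T s)
    {p q : A × ℝ}
    (h : (Quot.mk _ p : TensQ A (fun r a => T r • a)) = Quot.mk _ q) :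
    RelT T p q := by
  refine ((relT_equiv T h0 hTadd).eqvGen_iff).1 (Relation.EqvGen.mono ?_ _ _ (Quot.eq.1 h))
  rintro a b ⟨r, hq1, hq2⟩
  exact ⟨r, 0, by rw [hq2]; push_cast; ring, by rw [h0, one_smul, hq1]⟩

lemma tensq_common (z w : TensQ A (fun r a => T r • a)) :
    ∃ (p q : A) (x : ℝ),
      z = TensQ.mk (fun r a => T r • a) p x ∧ w = TensQ.mk (fun r a => T r • a) q x := by
  obtain ⟨⟨p, s⟩, hp⟩ := Quot.exists_rep z
  obtain ⟨⟨q, t⟩, hq⟩ := Quot.exists_rep w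
  refine ⟨T (max s t - s).toNNReal • p, T (max s t - t).toNNReal • q, max s t, ?_, ?_⟩
  · rw [← hp]; exact tensq_raise _ p (le_max_left _ _)
  · rw [← hq]; exact tensq_raise _ q (le_max_right _ _)

lemma tensq_common3 (z v w : TensQ A (fun r a => T r • a)) :
    ∃ (p q u : A) (x : ℝ),
      z = TensQ.mk (fun r a => T r • a) p x ∧ v = TensQ.mk (fun r a => T r • a) q x ∧
        w = TensQ.mk (fun r a => T r • a) u x := by
  obtain ⟨⟨p, s1⟩, hp⟩ := Quot.exists_rep z
  obtain ⟨⟨q, s2⟩, hq⟩ := Quot.exists_rep v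
  obtain ⟨⟨u, s3⟩, hu⟩ := Quot.exists_rep w
  set x := max (max s1 s2) s3 with hx
  refine ⟨T (x - s1).toNNReal • p, T (x - s2).toNNReal • q, T (x - s3).toNNReal • u, x,
    ?_, ?_, ?_⟩
  · rw [← hp]; exact tensq_raise _ p (le_trans (le_max_left _ _) (le_max_left _ _))
  · rw [← hq]; exact tensq_raise _ q (le_trans (le_max_right _ _) (le_max_left _ _))
  · rw [← hu]; exact tensq_raise _ u (le_max_right _ _)

end TQ

end Stmt3Aux
namespace Stmt3Aux

section Val

variable {R : Type*} [CommRing R] (T : ℝ≥0 → R)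
  (h0 : T 0 = 1) (hTadd : ∀ r s : ℝ≥0, T (r + s) = T r * T s)
variable {A : Type*} [AddCommGroup A] [Module R A] (ρ : A → EReal)
  (hρ : ∀ a : A,
    ρ a = sSup {x : EReal | ∃ r : ℝ≥0, x = ((r : ℝ) : EReal) ∧ ∃ c : A, a = T r • c})
variable (valAΛ : TensQ A (fun r a => T r • a) → EReal)
  (hvalAΛ : ∀ (a : A) (s : ℝ), valAΛ (TensQ.mk _ a s) = ρ a - (s : EReal))
variable (subAΛ : TensQ A (fun r a => T r • a) → TensQ A (fun r a => T r • a) →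
      TensQ A (fun r a => T r • a))
  (hsubAΛ : ∀ (a a' : A) (s : ℝ),
      subAΛ (TensQ.mk _ a s) (TensQ.mk _ a' s) = TensQ.mk _ (a - a') s)

include hρ hvalAΛ in
lemma rho_smul (h0 : T 0 = 1) (r : ℝ≥0) (a : A) :
    ρ (T r • a) = ρ a + ((r:ℝ):EReal) := by
  have e : (TensQ.mk (fun r a => T r • a) a 0 : TensQ A _)
      = TensQ.mk (fun r a => T r • a) (T r • a) (0 + (r:ℝ)) :=
    Quot.sound ⟨r, rfl, rfl⟩
  have h2 := hvalAΛ (T r • a) (0 + (r:ℝ))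
  rw [← e, hvalAΛ a 0] at h2
  have hb : ρ (T r • a) ≠ ⊥ := rho_ne_bot T ρ hρ h0 _
  have h3 : ρ (T r • a) - ((0 + (r:ℝ) : ℝ):EReal) = ρ a := by
    rw [← h2]; simp
  have := eq_add_of_esub_eq hb h3
  simpa using this

include hρ hsubAΛ hvalAΛ in
lemma exists_val_sub (z w : TensQ A (fun r a => T r • a)) :
    ∃ (p q : A) (x : ℝ), z = TensQ.mk (fun r a => T r • a) p x ∧
      w = TensQ.mk (fun r a => T r • a) q x ∧
      valAΛ (subAΛ z w) = ρ (p - q) - (x:EReal) := by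
  obtain ⟨p, q, x, hz, hw⟩ := tensq_common T z w
  exact ⟨p, q, x, hz, hw, by rw [hz, hw, hsubAΛ, hvalAΛ]⟩

include hρ hsubAΛ hvalAΛ in
lemma val_sub_ne_bot (h0 : T 0 = 1) (z w : TensQ A (fun r a => T r • a)) :
    valAΛ (subAΛ z w) ≠ ⊥ := by
  obtain ⟨p, q, x, _, _, hv⟩ := exists_val_sub T ρ hρ valAΛ hvalAΛ subAΛ hsubAΛ z w
  rw [hv]
  exact esub_ne_bot x (rho_ne_bot T ρ hρ h0 _)

include hρ hsubAΛ hvalAΛ in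
lemma dist_self (z : TensQ A (fun r a => T r • a)) :
    vsDist valAΛ subAΛ z z = 0 := by
  obtain ⟨⟨p, s⟩, hp⟩ := Quot.exists_rep z
  rw [vsDist_eq_eD]
  refine eD_eq_zero ?_
  have hz : z = TensQ.mk (fun r a => T r • a) p s := hp.symm
  rw [hz, hsubAΛ, hvalAΛ, sub_self, rho_zero T ρ hρ, EReal.top_sub_coe]

include hρ hsubAΛ hvalAΛ in
lemma dist_tens (h0 : T 0 = 1) (a b : A) (x : ℝ) :
    vsDist valAΛ subAΛ (TensQ.mk (fun r a => T r • a) a x) (TensQ.mk (fun r a => T r • a) b x)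
      = Real.exp x * vsDist ρ (fun x y => x - y) a b := by
  show eD (valAΛ (subAΛ _ _)) = Real.exp x * eD (ρ (a - b))
  rw [hsubAΛ, hvalAΛ]
  by_cases h : ρ (a - b) = ⊤
  · rw [eD_eq_zero ((esub_top_iff _ _).2 h), eD_eq_zero h, mul_zero]
  · unfold eD
    rw [if_neg (fun hc => h ((esub_top_iff _ _).1 hc)), if_neg h,
      toReal_esub x h (rho_ne_bot T ρ hρ h0 _), ← Real.exp_add]
    congr 1; ring

include hρ hsubAΛ hvalAΛ in
lemma dist_symm (z w : TensQ A (fun r a => T r • a)) :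
    vsDist valAΛ subAΛ z w = vsDist valAΛ subAΛ w z := by
  obtain ⟨p, q, x, hz, hw⟩ := tensq_common T z w
  rw [vsDist_eq_eD, vsDist_eq_eD, hz, hw, hsubAΛ, hsubAΛ, hvalAΛ, hvalAΛ]
  rw [show ρ (q - p) = ρ (p - q) by rw [← neg_sub p q, rho_neg T ρ hρ]]

include hρ hsubAΛ hvalAΛ in
lemma dist_triangle (h0 : T 0 = 1) (hTadd : ∀ r s : ℝ≥0, T (r + s) = T r * T s)
    (z v w : TensQ A (fun r a => T r • a)) :
    vsDist valAΛ subAΛ z w ≤ vsDist valAΛ subAΛ z v + vsDist valAΛ subAΛ v w := by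
  obtain ⟨p, q, u, x, hz, hv, hw⟩ := tensq_common3 T z v w
  rw [vsDist_eq_eD, vsDist_eq_eD, vsDist_eq_eD, hz, hv, hw, hsubAΛ, hsubAΛ, hsubAΛ,
    hvalAΛ, hvalAΛ, hvalAΛ]
  have hmin : min (ρ (p - q)) (ρ (q - u)) ≤ ρ (p - u) := by
    have h := rho_add T ρ hρ hTadd (p - q) (q - u)
    rw [sub_add_sub_cancel] at h
    exact h
  rcases le_total (ρ (p - q)) (ρ (q - u)) with hle | hle
  · have h1 : ρ (p - q) ≤ ρ (p - u) := le_trans (by rw [min_eq_left hle]) hmin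
    refine le_trans ?_ (le_add_of_nonneg_right (eD_nonneg _))
    exact eD_mono (esub_ne_bot x (rho_ne_bot T ρ hρ h0 _)) (EReal.sub_le_sub h1 (le_refl _))
  · have h1 : ρ (q - u) ≤ ρ (p - u) := le_trans (by rw [min_eq_right hle]) hmin
    refine le_trans ?_ (le_add_of_nonneg_left (eD_nonneg _))
    exact eD_mono (esub_ne_bot x (rho_ne_bot T ρ hρ h0 _)) (EReal.sub_le_sub h1 (le_refl _))

include hρ hsubAΛ hvalAΛ in
lemma nullwith_equiv (h0 : T 0 = 1) (hTadd : ∀ r s : ℝ≥0, T (r + s) = T r * T s) :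
    Equivalence (NullWith (vsDist valAΛ subAΛ)) := by
  constructor
  · intro s
    refine Filter.Tendsto.congr (fun n => ?_) tendsto_const_nhds
    exact (dist_self T ρ hρ valAΛ hvalAΛ subAΛ hsubAΛ _).symm
  · intro s t h
    refine Filter.Tendsto.congr (fun n => ?_) h
    exact dist_symm T ρ hρ valAΛ hvalAΛ subAΛ hsubAΛ _ _
  · intro s t u h1 h2
    have hsum : Filter.Tendsto
        (fun n => vsDist valAΛ subAΛ (s.1 n) (t.1 n) + vsDist valAΛ subAΛ (t.1 n) (u.1 n))
        Filter.atTop (nhds 0) := by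
      simpa using h1.add h2
    refine squeeze_zero (fun n => ?_) (fun n => ?_) hsum
    · rw [vsDist_eq_eD]; exact eD_nonneg _
    · exact dist_triangle T ρ hρ valAΛ hvalAΛ subAΛ hsubAΛ h0 hTadd _ _ _

end Val

end Stmt3Aux
namespace Stmt3Aux

section Conv

variable {R : Type*} [CommRing R] (T : ℝ≥0 → R)
variable {A : Type*} [AddCommGroup A] [Module R A] (ρ : A → EReal)
  (hρ : ∀ a : A,
    ρ a = sSup {x : EReal | ∃ r : ℝ≥0, x = ((r : ℝ) : EReal) ∧ ∃ c : A, a = T r • c})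
variable (valAΛ : TensQ A (fun r a => T r • a) → EReal)
  (hvalAΛ : ∀ (a : A) (s : ℝ), valAΛ (TensQ.mk _ a s) = ρ a - (s : EReal))
variable (subAΛ : TensQ A (fun r a => T r • a) → TensQ A (fun r a => T r • a) →
      TensQ A (fun r a => T r • a))
  (hsubAΛ : ∀ (a a' : A) (s : ℝ),
      subAΛ (TensQ.mk _ a s) (TensQ.mk _ a' s) = TensQ.mk _ (a - a') s)

lemma dA_eq (a b : A) : vsDist ρ (fun x y => x - y) a b = eD (ρ (a - b)) := rfl

include hρ hvalAΛ in
lemma cauchy_smul (h0 : T 0 = 1) (r : ℝ≥0) {s : ℕ → A}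
    (hs : IsCauchyWith (vsDist ρ (fun x y => x - y)) s) :
    IsCauchyWith (vsDist ρ (fun x y => x - y)) (fun n => T r • s n) := by
  intro ε hε
  obtain ⟨N, hN⟩ := hs ε hε
  refine ⟨N, fun m hm n hn => lt_of_le_of_lt ?_ (hN m hm n hn)⟩
  rw [dA_eq, dA_eq, ← smul_sub]
  rw [rho_smul T ρ hρ valAΛ hvalAΛ h0]
  refine eD_mono (rho_ne_bot T ρ hρ h0 _) ?_
  calc ρ (s m - s n) = ρ (s m - s n) + 0 := (add_zero _).symm
    _ ≤ ρ (s m - s n) + ((r:ℝ):EReal) :=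
        add_le_add (le_refl _) (by exact_mod_cast r.2)

include hρ hsubAΛ hvalAΛ in
lemma cauchy_tens (h0 : T 0 = 1) (x : ℝ) {s : ℕ → A}
    (hs : IsCauchyWith (vsDist ρ (fun x y => x - y)) s) :
    IsCauchyWith (vsDist valAΛ subAΛ) (fun n => TensQ.mk (fun r a => T r • a) (s n) x) := by
  intro ε hε
  obtain ⟨N, hN⟩ := hs (ε * Real.exp (-x)) (by positivity)
  refine ⟨N, fun m hm n hn => ?_⟩
  rw [dist_tens T ρ hρ valAΛ hvalAΛ subAΛ hsubAΛ h0]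
  have h1 := hN m hm n hn
  have h2 := (mul_lt_mul_iff_right₀ (Real.exp_pos x)).2 h1
  calc Real.exp x * vsDist ρ (fun x y => x - y) (s m) (s n)
      < Real.exp x * (ε * Real.exp (-x)) := h2
    _ = ε := by rw [Real.exp_neg]; field_simp

include hρ in
lemma rho_conv (h0 : T 0 = 1) (hTadd : ∀ r s : ℝ≥0, T (r + s) = T r * T s) {s : ℕ → A}
    (hs : IsCauchyWith (vsDist ρ (fun x y => x - y)) s) :
    ∃ L : EReal, Filter.Tendsto (fun n => ρ (s n)) Filter.atTop (nhds L) ∧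
      ∀ x : ℝ, Filter.Tendsto (fun n => ρ (s n) - (x:EReal)) Filter.atTop
        (nhds (L - (x:EReal))) := by
  by_cases hdiv : ∀ k : ℝ, ∃ N, ∀ n ≥ N, (k:EReal) < ρ (s n)
  · refine ⟨⊤, ?_, ?_⟩
    · rw [EReal.tendsto_nhds_top_iff_real]
      intro k; obtain ⟨N, hN⟩ := hdiv k
      exact Filter.eventually_atTop.2 ⟨N, hN⟩
    · intro x
      rw [EReal.top_sub_coe, EReal.tendsto_nhds_top_iff_real]
      intro k; obtain ⟨N, hN⟩ := hdiv (k + x)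
      refine Filter.eventually_atTop.2 ⟨N, fun n hn => ?_⟩
      exact (lt_esub_iff (rho_ne_bot T ρ hρ h0 _)).2 (hN n hn)
  · push_neg at hdiv
    obtain ⟨k, hk⟩ := hdiv
    obtain ⟨N0, hN0⟩ := hs (Real.exp (-k)) (Real.exp_pos _)
    obtain ⟨n0, hn0N, hn0⟩ := hk N0
    have key : ∀ m ≥ N0, ρ (s m) = ρ (s n0) := by
      intro m hm
      have hd : (k:EReal) < ρ (s m - s n0) := by
        have h1 := hN0 m hm n0 hn0N
        rw [dA_eq] at h1
        exact (eD_lt_exp (rho_ne_bot T ρ hρ h0 _)).1 h1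
      have hgt : ρ (s n0) < ρ (s m - s n0) := lt_of_le_of_lt hn0 hd
      have h1 : ρ (s n0) ≤ ρ (s m) := by
        have h := rho_add T ρ hρ hTadd (s m - s n0) (s n0)
        rw [sub_add_cancel] at h
        exact le_trans (le_min (le_of_lt hgt) (le_refl _)) h
      have h2 : ρ (s m) ≤ ρ (s n0) := by
        by_contra hc
        push_neg at hc
        have h := rho_min T ρ hρ hTadd (s m) (s m - s n0)
        rw [sub_sub_cancel] at h
        exact absurd h (not_le.2 (lt_min hc hgt))
      exact le_antisymm h2 h1
    refine ⟨ρ (s n0), ?_, fun x => ?_⟩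
    · exact Filter.Tendsto.congr'
        (Filter.eventually_atTop.2 ⟨N0, fun n hn => (key n hn).symm⟩) tendsto_const_nhds
    · exact Filter.Tendsto.congr'
        (Filter.eventually_atTop.2 ⟨N0, fun n hn => by
          show ρ (s n0) - (x:EReal) = ρ (s n) - (x:EReal); rw [key n hn]⟩) tendsto_const_nhds

end Conv

end Stmt3Aux
namespace Stmt3Aux

section Repr

variable {R : Type*} [CommRing R] (T : ℝ≥0 → R)
variable {A : Type*} [AddCommGroup A] [Module R A] (ρ : A → EReal)
  (hρ : ∀ a : A,
    ρ a = sSup {x : EReal | ∃ r : ℝ≥0, x = ((r : ℝ) : EReal) ∧ ∃ c : A, a = T r • c})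

include hρ in
lemma exists_repr (hTadd : ∀ r s : ℝ≥0, T (r + s) = T r * T s) (c : A) {t x : ℝ}
    (h : ((t - x : ℝ) : EReal) < ρ c) :
    ∃ b : A, TensQ.mk (fun r a => T r • a) c t = TensQ.mk (fun r a => T r • a) b x := by
  rcases le_or_gt t x with hle | hlt
  · exact ⟨_, tensq_raise _ c hle⟩
  · obtain ⟨r1, hr1, c1, hc1⟩ := rho_exists T ρ hρ h
    set r : ℝ≥0 := (t - x).toNNReal with hr
    have hcoe : (r:ℝ) = t - x := Real.coe_toNNReal _ (sub_nonneg.2 hlt.le)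
    have hrr1 : r ≤ r1 := by
      rw [← NNReal.coe_le_coe, hcoe]
      rw [EReal.coe_lt_coe_iff] at hr1
      exact hr1.le
    refine ⟨T (r1 - r) • c1, (Quot.sound ⟨r, ?_, ?_⟩).symm⟩
    · show c = T r • T (r1 - r) • c1
      rw [smul_T T hTadd, add_tsub_cancel_of_le hrr1, ← hc1]
    · show t = x + (r:ℝ)
      rw [hcoe]; ring

end Repr

end Stmt3Aux

open Stmt3Aux

/-- let `A` be a free module over the Novikov ring, with its canonical
filtration `ρ(a) = sup{r : a ∈ T^r A}` and the induced non-archimedean valuation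
`val(a/T^s) = ρ(a) − s` on `A ⊗ Λ`.  Then the natural map `Â ⊗ Λ → (A ⊗ Λ)^` from
the (Cauchy) completion of `A` base changed to the Novikov field to the completion
of the normed space `A ⊗ Λ` is a valuation-preserving isomorphism.  All auxiliary
structure maps (the rescaling action on `Â`, the valuation and difference on
`A ⊗ Λ`, the natural map, and the valuations on the two completions) are
characterized by their defining properties as hypotheses. -/
theorem statement3 {R : Type*} [CommRing R]
    (T : ℝ≥0 → R) (h0 : T 0 = 1) (hTadd : ∀ r s : ℝ≥0, T (r + s) = T r * T s)
    {A : Type*} [AddCommGroup A] [Module R A]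
    {ι : Type*} (bA : Module.Basis ι R A)
    (ρ : A → EReal)
    (hρ : ∀ a : A,
      ρ a = sSup {x : EReal | ∃ r : ℝ≥0, x = ((r : ℝ) : EReal) ∧ ∃ c : A, a = T r • c})
    (valAΛ : TensQ A (fun r a => T r • a) → EReal)
    (hvalAΛ : ∀ (a : A) (s : ℝ), valAΛ (TensQ.mk _ a s) = ρ a - (s : EReal))
    (subAΛ : TensQ A (fun r a => T r • a) → TensQ A (fun r a => T r • a) →
      TensQ A (fun r a => T r • a))
    (hsubAΛ : ∀ (a a' : A) (s : ℝ),
      subAΛ (TensQ.mk _ a s) (TensQ.mk _ a' s) = TensQ.mk _ (a - a') s)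
    (hatSmul : ℝ≥0 → CompletionWith (vsDist ρ fun x y => x - y) →
      CompletionWith (vsDist ρ fun x y => x - y))
    (hhatSmul : ∀ (r : ℝ≥0)
        (s t : {s : ℕ → A // IsCauchyWith (vsDist ρ fun x y => x - y) s}),
      (∀ n, t.1 n = T r • s.1 n) →
        hatSmul r (CompletionWith.mk _ s) = CompletionWith.mk _ t)
    (Φ : TensQ (CompletionWith (vsDist ρ fun x y => x - y)) hatSmul →
      CompletionWith (vsDist valAΛ subAΛ))
    (hΦ : ∀ (s : {s : ℕ → A // IsCauchyWith (vsDist ρ fun x y => x - y) s}) (x : ℝ)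
        (u : {u : ℕ → TensQ A (fun r a => T r • a) //
          IsCauchyWith (vsDist valAΛ subAΛ) u}),
      (∀ n, u.1 n = TensQ.mk _ (s.1 n) x) →
        Φ (TensQ.mk _ (CompletionWith.mk _ s) x) = CompletionWith.mk _ u)
    (valTens : TensQ (CompletionWith (vsDist ρ fun x y => x - y)) hatSmul → EReal)
    (hvalTens : ∀ (s : {s : ℕ → A // IsCauchyWith (vsDist ρ fun x y => x - y) s})
        (x : ℝ) (L : EReal),
      Filter.Tendsto (fun n => ρ (s.1 n)) Filter.atTop (nhds L) →
        valTens (TensQ.mk _ (CompletionWith.mk _ s) x) = L - (x : EReal))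
    (valComp : CompletionWith (vsDist valAΛ subAΛ) → EReal)
    (hvalComp : ∀ (u : {u : ℕ → TensQ A (fun r a => T r • a) //
          IsCauchyWith (vsDist valAΛ subAΛ) u}) (L : EReal),
      Filter.Tendsto (fun n => valAΛ (u.1 n)) Filter.atTop (nhds L) →
        valComp (CompletionWith.mk _ u) = L) :
    Function.Bijective Φ ∧ ∀ z, valComp (Φ z) = valTens z := by
  classical
  have Rnb : ∀ a : A, ρ a ≠ ⊥ := rho_ne_bot T ρ hρ h0
  refine ⟨⟨?_, ?_⟩, ?_⟩
  · -- injectivity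
    intro z z' hzz
    obtain ⟨⟨C, t⟩, hz⟩ := Quot.exists_rep z
    obtain ⟨⟨C', t'⟩, hz'⟩ := Quot.exists_rep z'
    obtain ⟨⟨s, hsC⟩, hC⟩ := Quot.exists_rep C
    obtain ⟨⟨s', hsC'⟩, hC'⟩ := Quot.exists_rep C'
    set x := max t t' with hxdef
    set r := (x - t).toNNReal with hrdef
    set r' := (x - t').toNNReal with hrdef'
    have hz2 : z = TensQ.mk hatSmul (hatSmul r C) x := by
      rw [← hz]; exact tensq_raise hatSmul C (le_max_left _ _)
    have hz2' : z' = TensQ.mk hatSmul (hatSmul r' C') x := by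
      rw [← hz']; exact tensq_raise hatSmul C' (le_max_right _ _)
    have hsc : IsCauchyWith (vsDist ρ fun x y => x - y) (fun n => T r • s n) :=
      cauchy_smul T ρ hρ valAΛ hvalAΛ h0 r hsC
    have hsc' : IsCauchyWith (vsDist ρ fun x y => x - y) (fun n => T r' • s' n) :=
      cauchy_smul T ρ hρ valAΛ hvalAΛ h0 r' hsC'
    have hCr : hatSmul r C
        = CompletionWith.mk (vsDist ρ fun x y => x - y) ⟨fun n => T r • s n, hsc⟩ := by
      rw [← hC]; exact hhatSmul r ⟨s, hsC⟩ _ (fun n => rfl)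
    have hCr' : hatSmul r' C'
        = CompletionWith.mk (vsDist ρ fun x y => x - y) ⟨fun n => T r' • s' n, hsc'⟩ := by
      rw [← hC']; exact hhatSmul r' ⟨s', hsC'⟩ _ (fun n => rfl)
    have hPz : Φ z = CompletionWith.mk (vsDist valAΛ subAΛ)
        ⟨fun n => TensQ.mk (fun r a => T r • a) (T r • s n) x,
          cauchy_tens T ρ hρ valAΛ hvalAΛ subAΛ hsubAΛ h0 x hsc⟩ := by
      rw [hz2, hCr]; exact hΦ _ x _ (fun n => rfl)
    have hPz' : Φ z' = CompletionWith.mk (vsDist valAΛ subAΛ)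
        ⟨fun n => TensQ.mk (fun r a => T r • a) (T r' • s' n) x,
          cauchy_tens T ρ hρ valAΛ hvalAΛ subAΛ hsubAΛ h0 x hsc'⟩ := by
      rw [hz2', hCr']; exact hΦ _ x _ (fun n => rfl)
    have hmk : CompletionWith.mk (vsDist valAΛ subAΛ)
        ⟨fun n => TensQ.mk (fun r a => T r • a) (T r • s n) x,
          cauchy_tens T ρ hρ valAΛ hvalAΛ subAΛ hsubAΛ h0 x hsc⟩
        = CompletionWith.mk (vsDist valAΛ subAΛ)
        ⟨fun n => TensQ.mk (fun r a => T r • a) (T r' • s' n) x,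
          cauchy_tens T ρ hρ valAΛ hvalAΛ subAΛ hsubAΛ h0 x hsc'⟩ := by
      rw [← hPz, ← hPz', hzz]
    have hnull := ((nullwith_equiv T ρ hρ valAΛ hvalAΛ subAΛ hsubAΛ h0 hTadd).eqvGen_iff).1
      (Quot.eq.1 hmk)
    have htend : Filter.Tendsto (fun n => vsDist valAΛ subAΛ
        (TensQ.mk (fun r a => T r • a) (T r • s n) x)
        (TensQ.mk (fun r a => T r • a) (T r' • s' n) x)) Filter.atTop (nhds 0) := hnull
    have h2 := htend.const_mul (Real.exp (-x))
    rw [mul_zero] at h2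
    have hdA : Filter.Tendsto (fun n => vsDist ρ (fun x y => x - y)
        (T r • s n) (T r' • s' n)) Filter.atTop (nhds 0) := by
      refine h2.congr (fun n => ?_)
      rw [dist_tens T ρ hρ valAΛ hvalAΛ subAΛ hsubAΛ h0, Real.exp_neg, ← mul_assoc,
        inv_mul_cancel₀ (Real.exp_ne_zero x), one_mul]
    have hfin : CompletionWith.mk (vsDist ρ fun x y => x - y) ⟨fun n => T r • s n, hsc⟩
        = CompletionWith.mk (vsDist ρ fun x y => x - y) ⟨fun n => T r' • s' n, hsc'⟩ :=
      Quot.sound hdA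
    rw [hz2, hz2', hCr, hCr', hfin]
  · -- surjectivity
    intro y
    obtain ⟨⟨u, hu⟩, hy⟩ := Quot.exists_rep y
    obtain ⟨N0, hN0⟩ := hu 1 one_pos
    have hval : ∀ m, m ≥ N0 → ((0:ℝ):EReal) < valAΛ (subAΛ (u m) (u N0)) := by
      intro m hm
      have h1 := hN0 m hm N0 (le_refl _)
      rw [vsDist_eq_eD, show (1:ℝ) = Real.exp (-(0:ℝ)) by norm_num] at h1
      exact (eD_lt_exp (val_sub_ne_bot T ρ hρ valAΛ hvalAΛ subAΛ hsubAΛ h0 _ _)).1 h1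
    obtain ⟨⟨a0, s0⟩, ha0⟩ := Quot.exists_rep (u N0)
    set x := max s0 0 with hxdef
    have hx0 : (0:ℝ) ≤ x := le_max_right _ _
    set a0' := T (x - s0).toNNReal • a0 with ha0'def
    have huN0 : u N0 = TensQ.mk (fun r a => T r • a) a0' x := by
      rw [← ha0]; exact tensq_raise _ a0 (le_max_left _ _)
    have key : ∀ n : ℕ, ∃ bn : A, u (max n N0) = TensQ.mk (fun r a => T r • a) bn x := by
      intro n
      set m := max n N0 with hmdef
      have hm : m ≥ N0 := le_max_right _ _
      obtain ⟨⟨e, t⟩, he⟩ := Quot.exists_rep (subAΛ (u m) (u N0))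
      have hwv : valAΛ (subAΛ (u m) (u N0)) = ρ e - (t:EReal) := by
        rw [← he]; exact hvalAΛ e t
      have htlt : ((t - x:ℝ):EReal) < ρ e := by
        have h1 := hval m hm
        rw [hwv] at h1
        have h2 : ((0 + t : ℝ):EReal) < ρ e := (lt_esub_iff (Rnb e)).1 h1
        refine lt_of_le_of_lt ?_ h2
        rw [EReal.coe_le_coe_iff]
        linarith
      obtain ⟨c, hc⟩ := exists_repr T ρ hρ hTadd e htlt
      have hwc : subAΛ (u m) (u N0) = TensQ.mk (fun r a => T r • a) c x := by
        rw [← he]; exact hc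
      obtain ⟨⟨p, yp⟩, hp⟩ := Quot.exists_rep (u m)
      set y1 := max yp x with hy1def
      have hxy : x ≤ y1 := le_max_right _ _
      set E := T (y1 - yp).toNNReal • p with hEdef
      have hum : u m = TensQ.mk (fun r a => T r • a) E y1 := by
        rw [← hp]; exact tensq_raise _ p (le_max_left _ _)
      set ryx := (y1 - x).toNNReal with hryxdef
      have hryxc : (ryx:ℝ) = y1 - x := Real.coe_toNNReal _ (sub_nonneg.2 hxy)
      have huN0y : u N0 = TensQ.mk (fun r a => T r • a) (T ryx • a0') y1 := by
        rw [huN0]; exact tensq_raise _ a0' hxy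
      have hsub2 : subAΛ (u m) (u N0)
          = TensQ.mk (fun r a => T r • a) (E - T ryx • a0') y1 := by
        rw [hum, huN0y]; exact hsubAΛ _ _ _
      have hceq : (Quot.mk _ ((E - T ryx • a0', y1) : A × ℝ) : TensQ A (fun r a => T r • a))
          = Quot.mk _ ((c, x) : A × ℝ) := hsub2.symm.trans hwc
      obtain ⟨r1, r2, hsum, hsm⟩ := tensq_exact T h0 hTadd hceq
      have hsum' : y1 + (r1:ℝ) = x + (r2:ℝ) := hsum
      have hsm' : T r1 • (E - T ryx • a0') = T r2 • c := hsm
      have hr2 : r2 = ryx + r1 := by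
        refine NNReal.coe_injective ?_
        rw [NNReal.coe_add, hryxc]
        linarith
      have hsm2 : T r1 • E = T r1 • T ryx • (a0' + c) := by
        rw [smul_add, smul_add]
        refine sub_eq_iff_eq_add'.1 ?_
        rw [← smul_sub, hsm', hr2, add_comm ryx r1, ← smul_T T hTadd]
      refine ⟨a0' + c, ?_⟩
      rw [hum]
      calc TensQ.mk (fun r a => T r • a) E y1
          = TensQ.mk (fun r a => T r • a) (T r1 • E) (y1 + (r1:ℝ)) := tensq_shift _ E y1 r1
        _ = TensQ.mk (fun r a => T r • a) (T r1 • T ryx • (a0' + c)) (y1 + (r1:ℝ)) := by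
            rw [hsm2]
        _ = TensQ.mk (fun r a => T r • a) (T (r1 + ryx) • (a0' + c)) (y1 + (r1:ℝ)) := by
            rw [smul_T T hTadd]
        _ = TensQ.mk (fun r a => T r • a) (a0' + c) x := by
            rw [show y1 + (r1:ℝ) = x + ((r1 + ryx : ℝ≥0):ℝ) by push_cast [hryxc]; ring]
            exact (tensq_shift _ (a0' + c) x (r1 + ryx)).symm
    choose b hb using key
    have hbmax : ∀ n, n ≥ N0 → u n = TensQ.mk (fun r a => T r • a) (b n) x := by
      intro n hn
      have h1 := hb n
      rwa [max_eq_left hn] at h1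
    have hbC : IsCauchyWith (vsDist ρ fun x y => x - y) b := by
      intro ε hε
      obtain ⟨N, hN⟩ := hu (ε * Real.exp x) (by positivity)
      refine ⟨N, fun m hm n hn => ?_⟩
      have hd := hN (max m N0) (le_trans hm (le_max_left _ _)) (max n N0)
        (le_trans hn (le_max_left _ _))
      rw [hb m, hb n, dist_tens T ρ hρ valAΛ hvalAΛ subAΛ hsubAΛ h0,
        mul_comm ε (Real.exp x)] at hd
      exact (mul_lt_mul_iff_right₀ (Real.exp_pos x)).1 hd
    have hvC : IsCauchyWith (vsDist valAΛ subAΛ)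
        (fun n => TensQ.mk (fun r a => T r • a) (b n) x) :=
      cauchy_tens T ρ hρ valAΛ hvalAΛ subAΛ hsubAΛ h0 x hbC
    have hnull : NullWith (vsDist valAΛ subAΛ)
        ⟨fun n => TensQ.mk (fun r a => T r • a) (b n) x, hvC⟩ ⟨u, hu⟩ := by
      refine Filter.Tendsto.congr' ?_ tendsto_const_nhds
      refine Filter.eventually_atTop.2 ⟨N0, fun n hn => ?_⟩
      show (0:ℝ) = vsDist valAΛ subAΛ (TensQ.mk (fun r a => T r • a) (b n) x) (u n)
      rw [← hbmax n hn, dist_self T ρ hρ valAΛ hvalAΛ subAΛ hsubAΛ]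
    refine ⟨TensQ.mk hatSmul (CompletionWith.mk (vsDist ρ fun x y => x - y) ⟨b, hbC⟩) x, ?_⟩
    rw [hΦ ⟨b, hbC⟩ x ⟨fun n => TensQ.mk (fun r a => T r • a) (b n) x, hvC⟩ (fun n => rfl),
      ← hy]
    exact Quot.sound hnull
  · -- valuation preserving
    intro z
    obtain ⟨⟨C, x⟩, hz⟩ := Quot.exists_rep z
    obtain ⟨⟨s, hs⟩, hC⟩ := Quot.exists_rep C
    obtain ⟨L, hL1, hL2⟩ := rho_conv T ρ hρ h0 hTadd hs
    have hz' : z = TensQ.mk hatSmul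
        (CompletionWith.mk (vsDist ρ fun x y => x - y) ⟨s, hs⟩) x := by
      rw [← hz, ← hC]; rfl
    have huC : IsCauchyWith (vsDist valAΛ subAΛ)
        (fun n => TensQ.mk (fun r a => T r • a) (s n) x) :=
      cauchy_tens T ρ hρ valAΛ hvalAΛ subAΛ hsubAΛ h0 x hs
    have hPhi : Φ z = CompletionWith.mk (vsDist valAΛ subAΛ)
        ⟨fun n => TensQ.mk (fun r a => T r • a) (s n) x, huC⟩ := by
      rw [hz']; exact hΦ ⟨s, hs⟩ x _ (fun n => rfl)
    rw [hPhi, hz', hvalTens ⟨s, hs⟩ x L hL1]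
    refine hvalComp _ (L - (x:EReal)) ?_
    refine (hL2 x).congr (fun n => ?_)
    exact (hvalAΛ (s n) x).symm
end

section
/- Let 𝕜 be a non-archimedean valued field with valuation val. For a formal Laurent series f = Σ_{j ∈ (ℤⁿ)^∨} a_j x^j with coefficients in 𝕜, say f converges at m ∈ ℝⁿ if for every R ∈ ℝ there are only finitely many j with val(a_j) + j(m) < R. If f converges at two points m₀, m₁ ∈ ℝⁿ, then f converges at t·m₁ + (1−t)·m₀ for every t ∈ [0,1]. -/
/-- A formal Laurent series with coefficients `a : (ℤⁿ)^∨ → 𝕜` converges at a point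
`m ∈ ℝⁿ` if for every `R ∈ ℝ` there are only finitely many exponents `j` with
`val (a j) + j(m) < R`. -/
def LaurentConvergesAt {𝕜 : Type*} {n : ℕ} (val : 𝕜 → EReal)
    (a : (Fin n → ℤ) → 𝕜) (m : Fin n → ℝ) : Prop :=
  ∀ R : ℝ,
    {j : Fin n → ℤ | val (a j) + ((∑ i, (j i : ℝ) * m i : ℝ) : EReal) < (R : EReal)}.Finite

/-- the convergence domain of a formal Laurent series over a
non-archimedean valued field is convex: if the series converges at `m₀` and `m₁`,
then it converges at `t•m₁ + (1−t)•m₀` for every `t ∈ [0,1]`. -/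
theorem statement8 {𝕜 : Type*} [Field 𝕜] {n : ℕ} (val : 𝕜 → EReal)
    (hval0 : val 0 = ⊤)
    (a : (Fin n → ℤ) → 𝕜) (m₀ m₁ : Fin n → ℝ)
    (h₀ : LaurentConvergesAt val a m₀) (h₁ : LaurentConvergesAt val a m₁) :
    ∀ t : ℝ, t ∈ Set.Icc (0 : ℝ) 1 →
      LaurentConvergesAt val a (t • m₁ + (1 - t) • m₀) := by
  rintro t ⟨ht0, ht1⟩ R
  apply Set.Finite.subset ((h₀ R).union (h₁ R))
  intro j hj
  simp only [Set.mem_setOf_eq] at hj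
  set x : ℝ := ∑ i, (j i : ℝ) * m₀ i with hx
  set y : ℝ := ∑ i, (j i : ℝ) * m₁ i with hy
  have hsum : (∑ i, (j i : ℝ) * (t • m₁ + (1 - t) • m₀) i) = t * y + (1 - t) * x := by
    simp only [hx, hy, Pi.add_apply, Pi.smul_apply, smul_eq_mul, Finset.mul_sum]
    rw [← Finset.sum_add_distrib]
    exact Finset.sum_congr rfl fun i _ => by ring
  rw [hsum] at hj
  have hmin : min x y ≤ t * y + (1 - t) * x := by
    rcases min_cases x y with ⟨h, hle⟩ | ⟨h, hle⟩ <;> rw [h] <;> nlinarith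
  have key : val (a j) + ((min x y : ℝ) : EReal) < (R : EReal) :=
    lt_of_le_of_lt (add_le_add le_rfl (EReal.coe_le_coe_iff.mpr hmin)) hj
  rcases min_cases x y with ⟨h, _⟩ | ⟨h, _⟩
  · left; exact Set.mem_setOf_eq ▸ (by rw [h] at key; exact key)
  · right; exact Set.mem_setOf_eq ▸ (by rw [h] at key; exact key)
end

section
/- Consider the graded algebra of algebraic polyvector fields T* on the torus (𝕜*)ⁿ and the logarithmic volume form Ω₀ = (dy₁/y₁)∧⋯∧(dyₙ/yₙ). Define div_{Ω₀}(ω) = (−1)^{|ω|} ι_{Ω₀} ∘ d ∘ ι_{Ω₀}^{-1}(ω), where ι_{Ω₀}: T^* → Ω^{n−*} is the contraction isomorphism. Then for a monomial polyvector field z^{−α} y^{e_{j(1)}^∨+⋯+e_{j(k)}^∨} ∂/∂y_{j(1)} ⋯ ∂/∂y_{j(k)} corresponding under the natural map to z^α ⊗ e_{j(1)}∧⋯∧e_{j(k)}, the operator div_{Ω₀} acts as Δ(z^α ⊗ β) = z^α ⊗ ι_α β; i.e. the map 𝒜* → T* sending z^{e_i^∨}⊗1 ↦ y_i^{-1} and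 1⊗e_j ↦ y_j ∂/∂y_j intertwines Δ with div_{Ω₀}. -/
open scoped TensorProduct

noncomputable section

variable (𝕜 : Type*) [Field 𝕜] (n : ℕ)

/-- The linear functional on `𝕜ⁿ` determined by `α ∈ (ℤⁿ)^∨`. -/
def dualFunctional (α : Fin n → ℤ) : Module.Dual 𝕜 (Fin n → 𝕜) :=
  ∑ i : Fin n, (α i : 𝕜) • LinearMap.proj i

/-- The common underlying space of polyvector fields `T*` (with generators
`y_j ∂/∂y_j`) and logarithmic differential forms `Ω*` (with generators `dy_j/y_j`)
on the algebraic torus `(𝕜*)ⁿ`: Laurent polynomials tensored with the exterior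
algebra. -/
abbrev torusPolyvector : Type _ :=
  AddMonoidAlgebra 𝕜 (Fin n → ℤ) ⊗[𝕜] ExteriorAlgebra 𝕜 (Fin n → 𝕜)

/-- The monomial `y^β ⊗ ω`. -/
def tpMonomial (β : Fin n → ℤ) (ω : ExteriorAlgebra 𝕜 (Fin n → 𝕜)) :
    torusPolyvector 𝕜 n :=
  AddMonoidAlgebra.single β (1 : 𝕜) ⊗ₜ[𝕜] ω

/-- The wedge monomial `e_{j(1)} ∧ ⋯ ∧ e_{j(k)}` in the exterior algebra. -/
def wedgeMonomial {k : ℕ} (j : Fin k → Fin n) : ExteriorAlgebra 𝕜 (Fin n → 𝕜) :=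
  (List.ofFn fun l => ExteriorAlgebra.ι 𝕜 (Pi.single (j l) (1 : 𝕜))).prod

/-- The sign exponent `s(j) = ∑ (j(l) − l)` of a strictly monotone `j`. -/
def wedgeSign {k : ℕ} (j : Fin k → Fin n) : ℕ :=
  ∑ l : Fin k, ((j l : ℕ) - (l : ℕ))

namespace S15

variable {𝕜 : Type*} [Field 𝕜] {n : ℕ}

/-- basis wedge generator -/
def ee (m : Fin n) : ExteriorAlgebra 𝕜 (Fin n → 𝕜) :=
  ExteriorAlgebra.ι 𝕜 (Pi.single m (1 : 𝕜))

def wl (L : List (Fin n)) : ExteriorAlgebra 𝕜 (Fin n → 𝕜) :=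
  (L.map (fun m => ee (𝕜 := 𝕜) m)).prod

def WF (S : Finset (Fin n)) : ExteriorAlgebra 𝕜 (Fin n → 𝕜) :=
  wl (S.sort (· ≤ ·))

lemma wl_nil : (wl [] : ExteriorAlgebra 𝕜 (Fin n → 𝕜)) = 1 := rfl

lemma wl_cons (a : Fin n) (L : List (Fin n)) :
    (wl (a :: L) : ExteriorAlgebra 𝕜 (Fin n → 𝕜)) = ee a * wl L := by
  simp [wl]

lemma ee_swap (u v : Fin n) :
    (ee u : ExteriorAlgebra 𝕜 (Fin n → 𝕜)) * ee v = -(ee v * ee u) := by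
  simp only [ee]
  rw [eq_neg_iff_add_eq_zero]
  exact ExteriorAlgebra.ι_add_mul_swap _ _

lemma ee_sq (u : Fin n) : (ee u : ExteriorAlgebra 𝕜 (Fin n → 𝕜)) * ee u = 0 :=
  ExteriorAlgebra.ι_sq_zero _

lemma ee_mul_mem {m : Fin n} {L : List (Fin n)} (h : m ∈ L) :
    (ee m : ExteriorAlgebra 𝕜 (Fin n → 𝕜)) * wl L = 0 := by
  induction L with
  | nil => simp at h
  | cons a L ih =>
    rw [wl_cons, ← mul_assoc]
    rcases List.mem_cons.mp h with rfl | hm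
    · rw [ee_sq, zero_mul]
    · rw [ee_swap, neg_mul, mul_assoc, ih hm, mul_zero, neg_zero]

lemma ee_mul_wl (m : Fin n) (L : List (Fin n)) (hL : L.Pairwise (· ≤ ·)) :
    (ee m : ExteriorAlgebra 𝕜 (Fin n → 𝕜)) * wl L =
      ((-1 : 𝕜) ^ (L.countP (fun b => decide (b < m)))) • wl (L.orderedInsert (· ≤ ·) m) := by
  induction L with
  | nil => simp [wl]
  | cons a L ih =>
    rw [List.pairwise_cons] at hL
    by_cases hma : m ≤ a
    · have hc : (a :: L).countP (fun b => decide (b < m)) = 0 := by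
        rw [List.countP_eq_zero]
        intro b hb
        simp only [decide_eq_true_eq, not_lt]
        rcases List.mem_cons.mp hb with rfl | hbL
        · exact hma
        · exact hma.trans (hL.1 b hbL)
      rw [hc, pow_zero, one_smul, List.orderedInsert, if_pos hma, wl_cons, wl_cons, wl_cons]
    · have ham : a < m := lt_of_not_ge hma
      rw [List.orderedInsert, if_neg hma, wl_cons, ← mul_assoc, ee_swap, neg_mul, mul_assoc,
        ih hL.2, wl_cons]
      have hc : (a :: L).countP (fun b => decide (b < m)) =
          L.countP (fun b => decide (b < m)) + 1 := by
        rw [List.countP_cons, if_pos (by simpa using ham)]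
      rw [hc, mul_smul_comm, ← neg_smul, pow_succ]
      congr 1
      ring


lemma sort_countP (S : Finset (Fin n)) (m : Fin n) :
    (S.sort (· ≤ ·)).countP (fun b => decide (b < m)) = (S.filter (· < m)).card := by
  have h1 : Multiset.countP (· < m) (↑(S.sort (· ≤ ·)) : Multiset (Fin n)) =
      (S.sort (· ≤ ·)).countP (fun b => decide (b < m)) := Multiset.coe_countP _ _
  rw [← h1, Finset.sort_eq, Multiset.countP_eq_card_filter]
  rfl

lemma orderedInsert_sort (m : Fin n) (S : Finset (Fin n)) (hm : m ∉ S) :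
    (S.sort (· ≤ ·)).orderedInsert (· ≤ ·) m = (insert m S).sort (· ≤ ·) := by
  have hins : (insert m S).val = m ::ₘ S.val := by
    rw [Finset.insert_val, Multiset.ndinsert_of_notMem (by simpa using hm)]
  refine List.Perm.eq_of_pairwise'
    (List.Pairwise.orderedInsert _ _ (Finset.pairwise_sort _ _)) (Finset.pairwise_sort _ _) ?_
  refine (List.perm_orderedInsert _ m _).trans ?_
  apply Multiset.coe_eq_coe.mp
  rw [← Multiset.cons_coe, Finset.sort_eq, Finset.sort_eq, hins]

lemma ee_mul_WF {m : Fin n} {S : Finset (Fin n)} (hm : m ∉ S) :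
    (ee m : ExteriorAlgebra 𝕜 (Fin n → 𝕜)) * WF S =
      ((-1 : 𝕜) ^ ((S.filter (· < m)).card)) • WF (insert m S) := by
  rw [WF, ee_mul_wl m _ (Finset.pairwise_sort _ _), sort_countP, orderedInsert_sort m S hm, WF]

lemma ee_mul_WF_of_min {a : Fin n} {T : Finset (Fin n)} (ha : a ∉ T)
    (hmin : ∀ b ∈ T, a ≤ b) :
    (ee a : ExteriorAlgebra 𝕜 (Fin n → 𝕜)) * WF T = WF (insert a T) := by
  rw [WF, WF, Finset.sort_insert _ hmin ha, wl_cons]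

lemma contract_WF (f : Module.Dual 𝕜 (Fin n → 𝕜)) (S : Finset (Fin n)) :
    CliffordAlgebra.contractLeft f (WF S : ExteriorAlgebra 𝕜 (Fin n → 𝕜)) =
      ∑ m ∈ S, (((-1 : 𝕜) ^ ((S.filter (· < m)).card)) * f (Pi.single m 1)) • WF (S.erase m) := by
  induction S using Finset.strongInduction with
  | _ S IH =>
  rcases S.eq_empty_or_nonempty with rfl | hS
  · simp only [Finset.sum_empty]
    rw [show (WF ∅ : ExteriorAlgebra 𝕜 (Fin n → 𝕜)) = 1 by simp [WF, wl]]
    exact CliffordAlgebra.contractLeft_one _ _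
  · set a := S.min' hS with ha
    have haS : a ∈ S := S.min'_mem hS
    set S' := S.erase a with hS'
    have hmin : ∀ b ∈ S', a ≤ b := fun b hb => S.min'_le b (Finset.mem_of_mem_erase hb)
    have haS' : a ∉ S' := Finset.notMem_erase _ _
    have hWF : (WF S : ExteriorAlgebra 𝕜 (Fin n → 𝕜)) = ee a * WF S' := by
      rw [ee_mul_WF_of_min haS' hmin, Finset.insert_erase haS]
    rw [hWF]
    rw [show ((ee a : ExteriorAlgebra 𝕜 (Fin n → 𝕜))) = CliffordAlgebra.ι 0 (Pi.single a 1) from rfl]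
    rw [CliffordAlgebra.contractLeft_ι_mul]
    rw [show CliffordAlgebra.ι (0 : QuadraticForm 𝕜 (Fin n → 𝕜)) (Pi.single a (1:𝕜)) = ee a from rfl]
    rw [IH S' (Finset.erase_ssubset haS)]
    rw [Finset.mul_sum, ← Finset.add_sum_erase _ _ haS]
    have hterm_a : (((-1 : 𝕜) ^ ((S.filter (· < a)).card)) * f (Pi.single a 1)) • WF (S.erase a)
        = f (Pi.single a 1) • (WF S' : ExteriorAlgebra 𝕜 (Fin n → 𝕜)) := by
      have : S.filter (· < a) = ∅ := by
        rw [Finset.filter_eq_empty_iff]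
        intro b hb
        exact not_lt.mpr (S.min'_le b hb)
      rw [this, Finset.card_empty, pow_zero, one_mul, ← hS']
    rw [hterm_a, sub_eq_add_neg, ← Finset.sum_neg_distrib]
    congr 1
    refine Finset.sum_congr rfl fun m hm => ?_
    have hmS' : m ∈ S' := by rwa [← hS'] at hm
    have hma : a ≠ m := fun h => haS' (h ▸ hmS')
    have halt : a < m := lt_of_le_of_ne (hmin m hmS') hma
    have h1 : (ee a : ExteriorAlgebra 𝕜 (Fin n → 𝕜)) * WF (S'.erase m) = WF (S.erase m) := by
      rw [ee_mul_WF_of_min (fun h => haS' (Finset.mem_of_mem_erase h))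
        (fun b hb => hmin b (Finset.mem_of_mem_erase hb))]
      congr 1
      rw [hS', Finset.erase_right_comm, Finset.insert_erase]
      exact Finset.mem_erase.mpr ⟨hma, haS⟩
    have h2 : (S.filter (· < m)).card = (S'.filter (· < m)).card + 1 := by
      have : S.filter (· < m) = insert a (S'.filter (· < m)) := by
        conv_lhs => rw [← Finset.insert_erase haS, ← hS']
        rw [Finset.filter_insert, if_pos halt]
      rw [this, Finset.card_insert_of_notMem (fun h => haS' (Finset.mem_filter.mp h).1)]
    rw [mul_smul_comm, h1, h2, ← neg_smul, pow_succ]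
    congr 1
    ring


lemma strictMono_le {k : ℕ} {j : Fin k → Fin n} (hj : StrictMono j) (l : Fin k) :
    (l : ℕ) ≤ (j l : ℕ) := by
  have H : ∀ i : ℕ, ∀ h : i < k, i ≤ (j ⟨i, h⟩ : ℕ) := by
    intro i
    induction i with
    | zero => intro h; exact Nat.zero_le _
    | succ i ih =>
      intro h
      have h' : i < k := Nat.lt_of_succ_lt h
      have hlt : j ⟨i, h'⟩ < j ⟨i + 1, h⟩ := hj (by simp [Fin.lt_def])
      have h2 := ih h'
      have hlt' : (j ⟨i, h'⟩ : ℕ) < (j ⟨i + 1, h⟩ : ℕ) := hlt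
      omega
  simpa using H l l.2

lemma wedgeMonomial_orderEmb (S : Finset (Fin n)) {k : ℕ} (h : S.card = k) :
    wedgeMonomial 𝕜 n (S.orderEmbOfFin h) = WF S := by
  rw [wedgeMonomial, WF, wl]
  congr 1
  apply List.ext_getElem
  · simp [h]
  · intro i h1 h2
    simp [List.getElem_ofFn, ee, Finset.orderEmbOfFin_apply]

lemma wedgeSign_orderEmb (S : Finset (Fin n)) {k : ℕ} (h : S.card = k) :
    wedgeSign n (S.orderEmbOfFin h) + ∑ i ∈ Finset.range k, i = ∑ x ∈ S, (x : ℕ) := by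
  rw [wedgeSign, ← Fin.sum_univ_eq_sum_range (fun i => (i : ℕ)) k, ← Finset.sum_add_distrib]
  have h1 : ∀ l : Fin k, ((S.orderEmbOfFin h l : ℕ) - (l : ℕ)) + (l : ℕ)
      = (S.orderEmbOfFin h l : ℕ) :=
    fun l => Nat.sub_add_cancel (strictMono_le (S.orderEmbOfFin h).strictMono l)
  rw [Finset.sum_congr rfl (fun l _ => h1 l)]
  have hS : S = Finset.image (S.orderEmbOfFin h) Finset.univ := by
    apply Finset.coe_injective
    rw [Finset.coe_image, Finset.coe_univ, Set.image_univ, Finset.range_orderEmbOfFin]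
  conv_rhs => rw [hS]
  rw [Finset.sum_image (fun a _ b _ hab => (S.orderEmbOfFin h).injective hab)]

lemma negpow_congr {a b : ℕ} (h : a % 2 = b % 2) : (-1 : 𝕜) ^ a = (-1 : 𝕜) ^ b := by
  conv_lhs => rw [← Nat.div_add_mod a 2]
  conv_rhs => rw [← Nat.div_add_mod b 2]
  rw [pow_add, pow_add, pow_mul, pow_mul, neg_one_sq, h]
  simp

lemma filter_lt_card_add (S : Finset (Fin n)) (m : Fin n) :
    (S.filter (· < m)).card + (Sᶜ.filter (· < m)).card = (m : ℕ) := by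
  classical
  have hdis : Disjoint (S.filter (· < m)) (Sᶜ.filter (· < m)) :=
    Finset.disjoint_filter_filter disjoint_compl_right
  have hun : S.filter (· < m) ∪ Sᶜ.filter (· < m) = Finset.univ.filter (· < m) := by
    rw [← Finset.filter_union, Finset.union_compl]
  rw [← Finset.card_union_of_disjoint hdis, hun]
  have h2 : Finset.univ.filter (· < m) = Finset.Iio m := by
    ext x; simp
  rw [h2, Fin.card_Iio]

lemma dualFunctional_single (α : Fin n → ℤ) (m : Fin n) :
    dualFunctional 𝕜 n α (Pi.single m 1) = (α m : 𝕜) := by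
  simp [dualFunctional, Pi.single_apply]

lemma psi_WF (Ψ : torusPolyvector 𝕜 n ≃ₗ[𝕜] torusPolyvector 𝕜 n)
    (hΨ : ∀ (fc : AddMonoidAlgebra 𝕜 (Fin n → ℤ)) (k : ℕ)
        (j : Fin k → Fin n) (j' : Fin (n - k) → Fin n),
      StrictMono j → StrictMono j' → Set.range j' = (Set.range j)ᶜ →
      Ψ (fc ⊗ₜ[𝕜] wedgeMonomial 𝕜 n j) =
        ((-1 : 𝕜) ^ wedgeSign n j) • (fc ⊗ₜ[𝕜] wedgeMonomial 𝕜 n j'))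
    (fc : AddMonoidAlgebra 𝕜 (Fin n → ℤ)) (S : Finset (Fin n)) :
    Ψ (fc ⊗ₜ[𝕜] (WF S : ExteriorAlgebra 𝕜 (Fin n → 𝕜))) =
      ((-1 : 𝕜) ^ (∑ x ∈ S, (x : ℕ) + ∑ i ∈ Finset.range S.card, i)) •
        (fc ⊗ₜ[𝕜] (WF Sᶜ : ExteriorAlgebra 𝕜 (Fin n → 𝕜))) := by
  have hc : Sᶜ.card = n - S.card := by simp [Finset.card_compl]
  have key := hΨ fc S.card (S.orderEmbOfFin rfl) (Sᶜ.orderEmbOfFin hc)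
    (S.orderEmbOfFin rfl).strictMono (Sᶜ.orderEmbOfFin hc).strictMono
    (by rw [Finset.range_orderEmbOfFin, Finset.range_orderEmbOfFin, Finset.coe_compl])
  rw [wedgeMonomial_orderEmb S rfl, wedgeMonomial_orderEmb Sᶜ hc] at key
  rw [key]
  congr 1
  apply negpow_congr
  have := wedgeSign_orderEmb S rfl
  omega

lemma psi_symm_WF (Ψ : torusPolyvector 𝕜 n ≃ₗ[𝕜] torusPolyvector 𝕜 n)
    (hΨ : ∀ (fc : AddMonoidAlgebra 𝕜 (Fin n → ℤ)) (k : ℕ)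
        (j : Fin k → Fin n) (j' : Fin (n - k) → Fin n),
      StrictMono j → StrictMono j' → Set.range j' = (Set.range j)ᶜ →
      Ψ (fc ⊗ₜ[𝕜] wedgeMonomial 𝕜 n j) =
        ((-1 : 𝕜) ^ wedgeSign n j) • (fc ⊗ₜ[𝕜] wedgeMonomial 𝕜 n j'))
    (fc : AddMonoidAlgebra 𝕜 (Fin n → ℤ)) (S : Finset (Fin n)) :
    Ψ.symm (fc ⊗ₜ[𝕜] (WF S : ExteriorAlgebra 𝕜 (Fin n → 𝕜))) =
      ((-1 : 𝕜) ^ (∑ x ∈ Sᶜ, (x : ℕ) + ∑ i ∈ Finset.range Sᶜ.card, i)) •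
        (fc ⊗ₜ[𝕜] (WF Sᶜ : ExteriorAlgebra 𝕜 (Fin n → 𝕜))) := by
  rw [LinearEquiv.symm_apply_eq, LinearEquiv.map_smul, psi_WF Ψ hΨ fc Sᶜ, compl_compl, smul_smul, ← pow_add]
  rw [Even.neg_one_pow ⟨_, rfl⟩, one_smul]


lemma ee_mul_WF_mem {m : Fin n} {S : Finset (Fin n)} (hm : m ∈ S) :
    (ee m : ExteriorAlgebra 𝕜 (Fin n → 𝕜)) * WF S = 0 :=
  ee_mul_mem ((Finset.mem_sort _).mpr hm)

end S15

set_option synthInstance.maxHeartbeats 1000000 in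
/-- the logarithmic volume form `Ω₀ = (dy₁/y₁)∧⋯∧(dyₙ/yₙ)` induces a
contraction isomorphism `ι_{Ω₀}` between polyvector fields and differential forms on
the torus, characterized on monomials by `y^γ (y∂)_J ↦ (−1)^{s(J)} y^γ (dlog y)_{Jᶜ}`,
and the divergence operator `div_{Ω₀}(ω) = (−1)^{|ω|} ι_{Ω₀} ∘ d ∘ ι_{Ω₀}⁻¹ (ω)`
(where `d` is the de Rham differential, in logarithmic coordinates
`d(y^β ω) = ∑ β_j y^β (dy_j/y_j) ∧ ω`) corresponds, under the natural map
`𝒜* → T*` sending `z^{e_i^∨} ⊗ 1 ↦ y_i⁻¹` and `1 ⊗ e_j ↦ y_j ∂/∂y_j` (so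
`z^α ⊗ e_J ↦ y^{−α} ⊗ (y∂)_J`), to the BV operator `Δ(z^α ⊗ β) = z^α ⊗ ι_α β`. -/
theorem statement15 {𝕜 : Type*} [Field 𝕜] [CharZero 𝕜] {n : ℕ}
    -- the de Rham differential in logarithmic coordinates
    (D : torusPolyvector 𝕜 n →ₗ[𝕜] torusPolyvector 𝕜 n)
    (hD : ∀ (β : Fin n → ℤ) (ω : ExteriorAlgebra 𝕜 (Fin n → 𝕜)),
      D (tpMonomial 𝕜 n β ω) =
        ∑ j : Fin n, (β j : 𝕜) •
          (AddMonoidAlgebra.single β (1 : 𝕜) ⊗ₜ[𝕜]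
            (ExteriorAlgebra.ι 𝕜 (Pi.single j (1 : 𝕜)) * ω)))
    -- the contraction against the logarithmic volume form `Ω₀`
    (Ψ : torusPolyvector 𝕜 n ≃ₗ[𝕜] torusPolyvector 𝕜 n)
    (hΨ : ∀ (fc : AddMonoidAlgebra 𝕜 (Fin n → ℤ)) (k : ℕ)
        (j : Fin k → Fin n) (j' : Fin (n - k) → Fin n),
      StrictMono j → StrictMono j' → Set.range j' = (Set.range j)ᶜ →
      Ψ (fc ⊗ₜ[𝕜] wedgeMonomial 𝕜 n j) =
        ((-1 : 𝕜) ^ wedgeSign n j) • (fc ⊗ₜ[𝕜] wedgeMonomial 𝕜 n j')) :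
    -- the divergence `(−1)^k Ψ⁻¹ ∘ D ∘ Ψ` acts on the image of `z^α ⊗ e_J` as `Δ`
    ∀ (α : Fin n → ℤ) (k : ℕ) (j : Fin k → Fin n), StrictMono j →
      ((-1 : 𝕜) ^ k) • (Ψ.symm (D (Ψ (tpMonomial 𝕜 n (-α) (wedgeMonomial 𝕜 n j))))) =
        tpMonomial 𝕜 n (-α)
          (CliffordAlgebra.contractLeft (dualFunctional 𝕜 n α) (wedgeMonomial 𝕜 n j)) := by
  intro α k j hj
  classical
  set S : Finset (Fin n) := Finset.image j Finset.univ with hSdef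
  have hk : S.card = k := by
    rw [hSdef, Finset.card_image_of_injective _ hj.injective, Finset.card_univ, Fintype.card_fin]
  have hje : j = S.orderEmbOfFin hk :=
    Finset.orderEmbOfFin_unique hk (fun x => Finset.mem_image_of_mem _ (Finset.mem_univ x)) hj
  have hwm : wedgeMonomial 𝕜 n j = S15.WF S := by
    rw [hje]; exact S15.wedgeMonomial_orderEmb S hk
  simp only [tpMonomial, hwm]
  -- left side: apply Ψ
  rw [S15.psi_WF Ψ hΨ _ S, LinearMap.map_smul, LinearEquiv.map_smul]
  -- apply D
  have hDv := hD (-α) (S15.WF Sᶜ)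
  simp only [tpMonomial] at hDv
  rw [hDv, map_sum]
  -- restrict the sum to S
  have hvanish : ∀ x ∈ Finset.univ, x ∉ S →
      Ψ.symm ((((-α) x : ℤ) : 𝕜) • (AddMonoidAlgebra.single (-α) (1 : 𝕜) ⊗ₜ[𝕜]
        (ExteriorAlgebra.ι 𝕜 (Pi.single x (1 : 𝕜)) * S15.WF Sᶜ))) = 0 := by
    intro x _ hx
    rw [show ExteriorAlgebra.ι 𝕜 (Pi.single x (1 : 𝕜)) * S15.WF Sᶜ = 0 from
      S15.ee_mul_WF_mem (Finset.mem_compl.mpr hx)]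
    simp
  rw [← Finset.sum_subset (Finset.subset_univ S) hvanish]
  -- right side: contraction formula
  rw [S15.contract_WF]
  simp only [TensorProduct.tmul_sum, TensorProduct.tmul_smul, S15.dualFunctional_single]
  -- compare term by term
  rw [Finset.smul_sum, Finset.smul_sum]
  refine Finset.sum_congr rfl fun m hm => ?_
  have hmc : m ∉ Sᶜ := fun h => (Finset.mem_compl.mp h) hm
  rw [LinearEquiv.map_smul,
    show ExteriorAlgebra.ι 𝕜 (Pi.single m (1 : 𝕜)) * S15.WF Sᶜ =
      ((-1 : 𝕜) ^ ((Sᶜ.filter (· < m)).card)) • S15.WF (insert m Sᶜ) from S15.ee_mul_WF hmc,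
    TensorProduct.tmul_smul, LinearEquiv.map_smul,
    S15.psi_symm_WF Ψ hΨ _ (insert m Sᶜ), Finset.compl_insert, compl_compl]
  rw [smul_smul, smul_smul, smul_smul, smul_smul]
  congr 1
  -- scalar identity
  have hσ : (∑ x ∈ S.erase m, (x : ℕ)) + (m : ℕ) = ∑ x ∈ S, (x : ℕ) :=
    Finset.sum_erase_add S _ hm
  have hcard : (S.erase m).card = k - 1 := by
    rw [Finset.card_erase_of_mem hm, hk]
  have hk1 : 1 ≤ k := by
    rw [← hk]; exact Finset.card_pos.mpr ⟨m, hm⟩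
  have hτ : ∑ i ∈ Finset.range k, i = (∑ i ∈ Finset.range (k - 1), i) + (k - 1) := by
    conv_lhs => rw [show k = (k - 1) + 1 by omega]
    rw [Finset.sum_range_succ]
  have hpc : (S.filter (· < m)).card + (Sᶜ.filter (· < m)).card = (m : ℕ) :=
    S15.filter_lt_card_add S m
  have hsign : (-1 : 𝕜) ^ (k + ((∑ x ∈ S, (x : ℕ)) + ∑ i ∈ Finset.range S.card, i)
        + (Sᶜ.filter (· < m)).card
        + ((∑ x ∈ S.erase m, (x : ℕ)) + ∑ i ∈ Finset.range (S.erase m).card, i) + 1)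
      = (-1 : 𝕜) ^ ((S.filter (· < m)).card) := by
    apply S15.negpow_congr
    rw [hk, hcard]
    omega
  simp only [Pi.neg_apply, Int.cast_neg]
  linear_combination ((α m : 𝕜)) * hsign
end
end
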